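/- Let Π be a collection of prime filters of a residuated lattice A and X ⊆ A. Then (⋂Π : X) = ⋂{P ∈ Π | X ⊄ P}, where (F : X) = {a ∈ A | x ∨ a ∈ F for all x ∈ X}. -/
import Mathlib


universe u

class ResiduatedLattice (A : Type u) extends Lattice A, BoundedOrder A where
  mul : A → A → A
  himp : A → A → A
  mul_comm : ∀ x y : A, mul x y = mul y x
  mul_assoc : ∀ x y z : A, mul (mul x y) z = mul x (mul y z)
  mul_top : ∀ x : A, mul x ⊤ = x
  adjoint : ∀ x y z : A, mul x y ≤ z ↔ x ≤ himp y z

namespace RL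

variable {A : Type u} [ResiduatedLattice A]

/-- A filter: a nonempty subset closed under the monoid operation `⊙` and closed
under joins with arbitrary elements. -/
def IsFilter (F : Set A) : Prop :=
  F.Nonempty ∧ (∀ x ∈ F, ∀ y ∈ F, ResiduatedLattice.mul x y ∈ F) ∧
    (∀ x ∈ F, ∀ y : A, x ⊔ y ∈ F)

/-- A prime filter: a proper filter such that `x ⊔ y ∈ P` implies `x ∈ P` or `y ∈ P`. -/
def IsPrime (P : Set A) : Prop :=
  IsFilter P ∧ P ≠ Set.univ ∧ ∀ x y : A, x ⊔ y ∈ P → x ∈ P ∨ y ∈ P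

/-- The filter generated by a subset `X`. -/
def Fgen (X : Set A) : Set A := ⋂₀ {G : Set A | IsFilter G ∧ X ⊆ G}

/-- An `X`-minimal prime filter: a minimal element of the set of prime filters containing `X`. -/
def MinPrimeOver (X : Set A) (P : Set A) : Prop :=
  IsPrime P ∧ X ⊆ P ∧ ∀ Q : Set A, IsPrime Q → X ⊆ Q → Q ⊆ P → Q = P

/-- A minimal prime filter. -/
def MinPrime (P : Set A) : Prop :=
  IsPrime P ∧ ∀ Q : Set A, IsPrime Q → Q ⊆ P → Q = P

/-- The coannihilator of `X` belonging to `F`. -/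
def coann (F : Set A) (X : Set A) : Set A := {a : A | ∀ x ∈ X, x ⊔ a ∈ F}

/-- `X^⊥ = {a | x ⊔ a = ⊤ for all x ∈ X}`. -/
def perp (X : Set A) : Set A := {a : A | ∀ x ∈ X, x ⊔ a = ⊤}

/-- `D_F(P) = {a | (F : a) ⊄ P}`. -/
def DF (F P : Set A) : Set A := {a : A | ¬ coann F {a} ⊆ P}

/-- A `∨`-closed subset: nonempty and closed under joins. -/
def VClosed (C : Set A) : Prop := C.Nonempty ∧ ∀ x ∈ C, ∀ y ∈ C, x ⊔ y ∈ C

end RL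

theorem coann_sInter {A : Type u} [ResiduatedLattice A] (𝔓 : Set (Set A))
    (h𝔓 : ∀ P ∈ 𝔓, RL.IsPrime P) (X : Set A) :
    RL.coann (⋂₀ 𝔓) X = ⋂₀ {P : Set A | P ∈ 𝔓 ∧ ¬ X ⊆ P} := by
  ext a
  simp only [RL.coann, Set.mem_setOf_eq, Set.mem_sInter]
  constructor
  · rintro h P ⟨hP, hXP⟩
    obtain ⟨x, hxX, hxP⟩ := Set.not_subset.mp hXP
    rcases (h𝔓 P hP).2.2 x a (h x hxX P hP) with hx | ha
    · exact absurd hx hxP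
    · exact ha
  · intro h x hxX P hP
    by_cases hXP : X ⊆ P
    · exact (h𝔓 P hP).1.2.2 x (hXP hxX) a
    · have := (h𝔓 P hP).1.2.2 a (h P ⟨hP, hXP⟩) x
      rwa [sup_comm] at this
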